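/- The configuration T consisting of full c×c blocks for cells of P and punctured c×c blocks (missing one interior cell) for empty cells of the bounding box of P is 4-connected, for any polyomino P and c ≥ 2. -/

import Mathlib

/-- 4-adjacency on the integer grid. -/
def Adj4 (p q : ℤ × ℤ) : Prop := |p.1 - q.1| + |p.2 - q.2| = 1

/-- A set of cells is 4-connected (and nonempty). -/
def ConnectedIn (S : Set (ℤ × ℤ)) : Prop :=
  S.Nonempty ∧ ∀ p ∈ S, ∀ q ∈ S,
    Relation.ReflTransGen (fun a b : ℤ × ℤ => a ∈ S ∧ b ∈ S ∧ Adj4 a b) p q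

/-- Scaling a set of cells by factor `c` (floor division). -/
def scaleSet (c : ℤ) (P : Set (ℤ × ℤ)) : Set (ℤ × ℤ) :=
  {p : ℤ × ℤ | (Int.fdiv p.1 c, Int.fdiv p.2 c) ∈ P}

/-- Every nonempty column is an integer interval. -/
def ColIntervals (P : Set (ℤ × ℤ)) : Prop :=
  ∀ x y₁ y₂ y : ℤ, (x, y₁) ∈ P → (x, y₂) ∈ P → y₁ ≤ y → y ≤ y₂ → (x, y) ∈ P

/-- The set of nonempty columns is an interval of x-values. -/
def ColsInterval (P : Set (ℤ × ℤ)) : Prop :=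
  ∀ x₁ x₂ x : ℤ, (∃ y, (x₁, y) ∈ P) → (∃ y, (x₂, y) ∈ P) → x₁ ≤ x → x ≤ x₂ →
    ∃ y, (x, y) ∈ P

/-- x-monotone (column-convex) polyomino. -/
def XMonotone (P : Set (ℤ × ℤ)) : Prop := ColIntervals P ∧ ColsInterval P

/-- Boundary cells: cells of `P` with a 4-neighbor outside `P`. -/
def Bdry (P : Set (ℤ × ℤ)) : Set (ℤ × ℤ) := {p | p ∈ P ∧ ∃ q, Adj4 p q ∧ q ∉ P}

/-- The c×c block of cell (a,b). -/
def cblock (c a b : ℤ) : Set (ℤ × ℤ) :=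
  {p | ∃ i j : ℤ, 0 ≤ i ∧ i < c ∧ 0 ≤ j ∧ j < c ∧ p = (c * a + i, c * b + j)}

/-- Bounding-box rectangle. -/
def boxR (xmin xmax ymin ymax : ℤ) : Set (ℤ × ℤ) :=
  {p | xmin ≤ p.1 ∧ p.1 ≤ xmax ∧ ymin ≤ p.2 ∧ p.2 ≤ ymax}

/-- Scaled configuration with punctured blocks (puncture at (ca+1, cb+1)) for empty cells. -/
def configT (c : ℤ) (P R : Set (ℤ × ℤ)) : Set (ℤ × ℤ) :=
  {p | ∃ a b : ℤ, (a, b) ∈ P ∧ p ∈ cblock c a b} ∪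
  {p | ∃ a b : ℤ, (a, b) ∈ R ∧ (a, b) ∉ P ∧ p ∈ cblock c a b ∧
        p ≠ (c * a + 1, c * b + 1)}

section AuxConn

open Relation

lemma adj4_symm : Symmetric Adj4 := by
  intro p q h
  unfold Adj4 at *
  rw [abs_sub_comm, abs_sub_comm q.2]
  exact h

lemma adj4_horiz {x x' y : ℤ} (h : x' = x + 1) : Adj4 (x, y) (x', y) := by
  subst h
  show |x - (x + 1)| + |y - y| = 1
  rw [sub_self, abs_zero, show x - (x + 1) = -1 by ring]
  simp

lemma adj4_vert {x y y' : ℤ} (h : y' = y + 1) : Adj4 (x, y) (x, y') := by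
  subst h
  show |x - x| + |y - (y + 1)| = 1
  rw [sub_self, abs_zero, show y - (y + 1) = -1 by ring]
  simp

lemma rtg_chain {α : Type*} {r : α → α → Prop} (f : ℤ → α) {m n : ℤ} (hmn : m ≤ n)
    (h : ∀ k, m ≤ k → k < n → Relation.ReflTransGen r (f k) (f (k + 1))) :
    Relation.ReflTransGen r (f m) (f n) := by
  refine Int.le_induction
    (motive := fun n _ => (∀ k, m ≤ k → k < n → Relation.ReflTransGen r (f k) (f (k + 1))) →
      Relation.ReflTransGen r (f m) (f n))
    (fun _ => .refl)
    (fun n hn ih h =>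
      (ih (fun k hk hk' => h k hk (by omega))).trans (h n hn (by omega)))
    n hmn h

lemma step_chain (S : Set (ℤ × ℤ)) (f : ℤ → ℤ × ℤ) {m n : ℤ} (hmn : m ≤ n)
    (hmem : ∀ k, m ≤ k → k ≤ n → f k ∈ S)
    (hadj : ∀ k, m ≤ k → k < n → Adj4 (f k) (f (k + 1))) :
    Relation.ReflTransGen (fun a b : ℤ × ℤ => a ∈ S ∧ b ∈ S ∧ Adj4 a b) (f m) (f n) :=
  rtg_chain f hmn (fun k hk hk' =>
    .single ⟨hmem k hk (by omega), hmem (k + 1) (by omega) (by omega), hadj k hk hk'⟩)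

lemma step_symm (S : Set (ℤ × ℤ)) :
    Symmetric (fun a b : ℤ × ℤ => a ∈ S ∧ b ∈ S ∧ Adj4 a b) :=
  fun _ _ h => ⟨h.2.1, h.1, adj4_symm h.2.2⟩

lemma mem_configT {c : ℤ} {P R : Set (ℤ × ℤ)} {a b x y : ℤ}
    (hR : (a, b) ∈ R) (h1 : c * a ≤ x) (h2 : x < c * a + c)
    (h3 : c * b ≤ y) (h4 : y < c * b + c)
    (hcond : (a, b) ∈ P ∨ ¬(x = c * a + 1 ∧ y = c * b + 1)) :
    (x, y) ∈ configT c P R := by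
  by_cases hP : (a, b) ∈ P
  · exact Or.inl ⟨a, b, hP, x - c * a, y - c * b, by omega, by omega, by omega, by omega,
      by rw [Prod.mk.injEq]; omega⟩
  · rcases hcond with hcond | hcond
    · exact absurd hcond hP
    · refine Or.inr ⟨a, b, hR, hP, ⟨x - c * a, y - c * b, by omega, by omega, by omega, by omega,
        by rw [Prod.mk.injEq]; omega⟩, ?_⟩
      rw [Ne, Prod.mk.injEq]
      omega

lemma corner_to_cell {c : ℤ} (hc : 2 ≤ c) {P R : Set (ℤ × ℤ)} {a b i j : ℤ}
    (hR : (a, b) ∈ R) (hi : 0 ≤ i) (hi' : i < c) (hj : 0 ≤ j) (hj' : j < c)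
    (hok : (a, b) ∈ P ∨ ¬(i = 1 ∧ j = 1)) :
    Relation.ReflTransGen
      (fun u v : ℤ × ℤ => u ∈ configT c P R ∧ v ∈ configT c P R ∧ Adj4 u v)
      (c * a, c * b) (c * a + i, c * b + j) := by
  by_cases h1 : i ≤ 1
  · have v : Relation.ReflTransGen
        (fun u v : ℤ × ℤ => u ∈ configT c P R ∧ v ∈ configT c P R ∧ Adj4 u v)
        (c * a, c * b) (c * a, c * b + j) := by
      have := step_chain (configT c P R) (fun k => (c * a, c * b + k)) hj
        (fun k hk hk' => mem_configT hR (by omega) (by omega) (by omega) (by omega)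
          (Or.inr (by omega)))
        (fun k hk hk' => adj4_vert (by ring))
      simpa using this
    have h : Relation.ReflTransGen
        (fun u v : ℤ × ℤ => u ∈ configT c P R ∧ v ∈ configT c P R ∧ Adj4 u v)
        (c * a, c * b + j) (c * a + i, c * b + j) := by
      have := step_chain (configT c P R) (fun k => (c * a + k, c * b + j)) hi
        (fun k hk hk' => by
          refine mem_configT hR (by omega) (by omega) (by omega) (by omega) ?_
          rcases hok with hP | h2
          · exact Or.inl hP
          · exact Or.inr (by omega))
        (fun k hk hk' => adj4_horiz (by ring))
      simpa using this
    exact v.trans h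
  · have h : Relation.ReflTransGen
        (fun u v : ℤ × ℤ => u ∈ configT c P R ∧ v ∈ configT c P R ∧ Adj4 u v)
        (c * a, c * b) (c * a + i, c * b) := by
      have := step_chain (configT c P R) (fun k => (c * a + k, c * b)) hi
        (fun k hk hk' => mem_configT hR (by omega) (by omega) (by omega) (by omega)
          (Or.inr (by omega)))
        (fun k hk hk' => adj4_horiz (by ring))
      simpa using this
    have v : Relation.ReflTransGen
        (fun u v : ℤ × ℤ => u ∈ configT c P R ∧ v ∈ configT c P R ∧ Adj4 u v)
        (c * a + i, c * b) (c * a + i, c * b + j) := by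
      have := step_chain (configT c P R) (fun k => (c * a + i, c * b + k)) hj
        (fun k hk hk' => mem_configT hR (by omega) (by omega) (by omega) (by omega)
          (Or.inr (by omega)))
        (fun k hk hk' => adj4_vert (by ring))
      simpa using this
    exact h.trans v

lemma corner_step_right {c : ℤ} (hc : 2 ≤ c) {P R : Set (ℤ × ℤ)} {a b : ℤ}
    (hR : (a, b) ∈ R) (hR' : (a + 1, b) ∈ R) :
    Relation.ReflTransGen
      (fun u v : ℤ × ℤ => u ∈ configT c P R ∧ v ∈ configT c P R ∧ Adj4 u v)
      (c * a, c * b) (c * (a + 1), c * b) := by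
  have e : c * (a + 1) = c * a + c := by ring
  have := step_chain (configT c P R) (fun k => (c * a + k, c * b))
    (show (0 : ℤ) ≤ c by omega)
    (fun k hk hk' => by
      by_cases h : k < c
      · exact mem_configT hR (by omega) (by omega) (by omega) (by omega) (Or.inr (by omega))
      · have hk2 : k = c := by omega
        exact mem_configT hR' (by rw [e]; omega) (by rw [e]; omega) (by omega) (by omega)
          (Or.inr (by rw [e]; omega)))
    (fun k hk hk' => adj4_horiz (by ring))
  simpa [e] using this

lemma corner_step_up {c : ℤ} (hc : 2 ≤ c) {P R : Set (ℤ × ℤ)} {a b : ℤ}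
    (hR : (a, b) ∈ R) (hR' : (a, b + 1) ∈ R) :
    Relation.ReflTransGen
      (fun u v : ℤ × ℤ => u ∈ configT c P R ∧ v ∈ configT c P R ∧ Adj4 u v)
      (c * a, c * b) (c * a, c * (b + 1)) := by
  have e : c * (b + 1) = c * b + c := by ring
  have := step_chain (configT c P R) (fun k => (c * a, c * b + k))
    (show (0 : ℤ) ≤ c by omega)
    (fun k hk hk' => by
      by_cases h : k < c
      · exact mem_configT hR (by omega) (by omega) (by omega) (by omega) (Or.inr (by omega))
      · have hk2 : k = c := by omega
        exact mem_configT hR' (by omega) (by omega) (by rw [e]; omega) (by rw [e]; omega)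
          (Or.inr (by rw [e]; omega)))
    (fun k hk hk' => adj4_vert (by ring))
  simpa [e] using this

end AuxConn

theorem punctured_configuration_connected
    (P : Set (ℤ × ℤ)) (hfin : P.Finite) (hne : P.Nonempty) (hconn : ConnectedIn P)
    (xmin xmax ymin ymax : ℤ)
    (hx1 : IsLeast (Prod.fst '' P) xmin) (hx2 : IsGreatest (Prod.fst '' P) xmax)
    (hy1 : IsLeast (Prod.snd '' P) ymin) (hy2 : IsGreatest (Prod.snd '' P) ymax)
    (c : ℤ) (hc : 2 ≤ c) :
    ConnectedIn (configT c P (boxR xmin xmax ymin ymax)) := by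
  set R : Set (ℤ × ℤ) := boxR xmin xmax ymin ymax with hRdef
  set T : Set (ℤ × ℤ) := configT c P R with hTdef
  set r : ℤ × ℤ → ℤ × ℤ → Prop := fun u v : ℤ × ℤ => u ∈ T ∧ v ∈ T ∧ Adj4 u v with hrdef
  have hPR : P ⊆ R := by
    rintro ⟨a, b⟩ h
    exact ⟨hx1.2 ⟨(a, b), h, rfl⟩, hx2.2 ⟨(a, b), h, rfl⟩,
      hy1.2 ⟨(a, b), h, rfl⟩, hy2.2 ⟨(a, b), h, rfl⟩⟩
  have rsymm : ∀ {u v : ℤ × ℤ}, Relation.ReflTransGen r u v → Relation.ReflTransGen r v u :=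
    fun h => letI : Std.Symm r := ⟨fun a b hab => step_symm T hab⟩; Std.Symm.symm _ _ h
  -- every point of T connects to the corner of a block of R
  have key : ∀ p ∈ T, ∃ a b : ℤ, (a, b) ∈ R ∧
      Relation.ReflTransGen r p (c * a, c * b) := by
    rintro p (⟨a, b, hPab, i, j, hi, hi', hj, hj', rfl⟩ |
      ⟨a, b, hRab, hnP, ⟨i, j, hi, hi', hj, hj', rfl⟩, hne'⟩)
    · exact ⟨a, b, hPR hPab,
        rsymm (corner_to_cell hc (hPR hPab) hi hi' hj hj' (Or.inl hPab))⟩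
    · refine ⟨a, b, hRab, rsymm (corner_to_cell hc hRab hi hi' hj hj' (Or.inr ?_))⟩
      rintro ⟨rfl, rfl⟩
      exact hne' rfl
  -- corners of R are all connected
  have hxpath : ∀ a a' b : ℤ, xmin ≤ a → a ≤ xmax → xmin ≤ a' → a' ≤ xmax →
      ymin ≤ b → b ≤ ymax →
      Relation.ReflTransGen r (c * a, c * b) (c * a', c * b) := by
    have base : ∀ a a' b : ℤ, xmin ≤ a → a' ≤ xmax → ymin ≤ b → b ≤ ymax → a ≤ a' →
        Relation.ReflTransGen r (c * a, c * b) (c * a', c * b) := by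
      intro a a' b h1 h2 h3 h4 h5
      exact rtg_chain (r := r) (fun k => (c * k, c * b)) h5
        (fun k hk hk' => corner_step_right hc
          ⟨by omega, by omega, h3, h4⟩ ⟨by omega, by omega, h3, h4⟩)
    intro a a' b h1 h2 h3 h4 h5 h6
    rcases le_total a a' with h | h
    · exact base a a' b h1 h4 h5 h6 h
    · exact rsymm (base a' a b h3 h2 h5 h6 h)
  have hypath : ∀ a b b' : ℤ, xmin ≤ a → a ≤ xmax → ymin ≤ b → b ≤ ymax →
      ymin ≤ b' → b' ≤ ymax →
      Relation.ReflTransGen r (c * a, c * b) (c * a, c * b') := by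
    have base : ∀ a b b' : ℤ, xmin ≤ a → a ≤ xmax → ymin ≤ b → b' ≤ ymax → b ≤ b' →
        Relation.ReflTransGen r (c * a, c * b) (c * a, c * b') := by
      intro a b b' h1 h2 h3 h4 h5
      exact rtg_chain (r := r) (fun k => (c * a, c * k)) h5
        (fun k hk hk' => corner_step_up hc
          ⟨h1, h2, by omega, by omega⟩ ⟨h1, h2, by omega, by omega⟩)
    intro a b b' h1 h2 h3 h4 h5 h6
    rcases le_total b b' with h | h
    · exact base a b b' h1 h2 h3 h6 h
    · exact rsymm (base a b' b h1 h2 h5 h4 h)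
  constructor
  · obtain ⟨⟨a0, b0⟩, hP0⟩ := hne
    exact ⟨(c * a0, c * b0), mem_configT (hPR hP0) le_rfl (by omega) le_rfl (by omega)
      (Or.inl hP0)⟩
  · intro p hp q hq
    obtain ⟨a, b, hR1, P1⟩ := key p hp
    obtain ⟨a', b', hR2, P2⟩ := key q hq
    obtain ⟨ha1, ha2, hb1, hb2⟩ := hR1
    obtain ⟨ha1', ha2', hb1', hb2'⟩ := hR2
    exact ((P1.trans (hxpath a a' b ha1 ha2 ha1' ha2' hb1 hb2)).trans
      (hypath a' b b' ha1' ha2' hb1 hb2 hb1' hb2')).trans (rsymm P2)
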